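/- (Global Maximum Waveform Time Span Theorem, N ≥ 2 sub-domains.) Let a > 0, T_s ∈ ℝ, τ > 0, and N ≥ 2. Let A₁ < A₂ < ⋯ < A_N and B₁ < B₂ < ⋯ < B_N be reals defining sub-domains Ωᵢ = [Aᵢ, Bᵢ] with A_{i+1} < Bᵢ for 1 ≤ i ≤ N−1 (consecutive sub-domains overlap) and Bᵢ ≤ A_{i+2} for 1 ≤ i ≤ N−2 (non-consecutive sub-domains are disjoint up to endpoints). Let u be a classical solution of the 1-D wave equation with speed a on [A₁, B_N] × [T_s, T_s + τ]. For each i, let p̂ᵢ be a classical solution of the 1-D wave equation with speed a on Ωᵢ × [T_s, T_s + τ] with initial data p̂ᵢ(x, T_s) = u(x, T_s) and ∂p̂ᵢ/∂t(x, T_s) = ∂u/∂t(x, T_s) for x ∈ Ωᵢ, with p̂₁(A₁, t) = u(A₁, t) and p̂_N(B_N, t) = u(B_N, t) for all t (outer Dirichlet data from u), and with zero flux at every inner boundary: ∂p̂ᵢ/∂x(Bᵢ, t) = 0 for i < N and ∂p̂ᵢ/∂x(Aᵢ, t) = 0 for i > 1, for all t ∈ [T_s, T_s + τ]. Define the global maximum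 waveform time span Δt := min over 1 ≤ i ≤ N−1 of (Bᵢ − A_{i+1})/(2a). Then for every i and every t ∈ [T_s, T_s + τ] with t − T_s ≤ Δt, the predictive boundary output flux waveforms equal those of the true solution: ∂p̂ᵢ/∂x(A_{i+1}, t) = ∂u/∂x(A_{i+1}, t) for 1 ≤ i ≤ N−1, and ∂p̂ᵢ/∂x(B_{i−1}, t) = ∂u/∂x(B_{i−1}, t) for 2 ≤ i ≤ N. -/

import Mathlib

/-- `p` is a classical solution of the 1-D wave equation with speed `a` on
`[c, d] × [T₀, T₁]`: it is twice continuously differentiable on an open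
neighbourhood of the rectangle and satisfies
`∂²p/∂t² = a² ∂²p/∂x²` there. -/
def IsWaveSolution (a c d T₀ T₁ : ℝ) (p : ℝ → ℝ → ℝ) : Prop :=
  ∃ U : Set (ℝ × ℝ), IsOpen U ∧ (Set.Icc c d ×ˢ Set.Icc T₀ T₁) ⊆ U ∧
    ContDiffOn ℝ 2 (fun q : ℝ × ℝ => p q.1 q.2) U ∧
    ∀ x ∈ Set.Icc c d, ∀ t ∈ Set.Icc T₀ T₁,
      deriv (deriv (fun s => p x s)) t = a ^ 2 * deriv (deriv (fun y => p y t)) x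

set_option maxHeartbeats 1000000

lemma deriv_eq_of_eqOn_Icc {f g : ℝ → ℝ} {c d x : ℝ} (hcd : c < d) (hx : x ∈ Set.Icc c d)
    (hf : DifferentiableAt ℝ f x) (hg : DifferentiableAt ℝ g x)
    (h0 : ∀ y ∈ Set.Icc c d, f y = g y) : deriv f x = deriv g x := by
  have hu : UniqueDiffWithinAt ℝ (Set.Icc c d) x := (uniqueDiffOn_Icc hcd) x hx
  have h1 : HasDerivWithinAt f (deriv f x) (Set.Icc c d) x := hf.hasDerivAt.hasDerivWithinAt
  have h2 : HasDerivWithinAt f (deriv g x) (Set.Icc c d) x :=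
    (hg.hasDerivAt.hasDerivWithinAt).congr (fun y hy => h0 y hy) (h0 x hx)
  exact hu.eq_deriv _ h1 h2

lemma hasDerivAt_unc_fst {Q : ℝ × ℝ → ℝ} {x t : ℝ} (h : DifferentiableAt ℝ Q (x, t)) :
    HasDerivAt (fun y => Q (y, t)) (fderiv ℝ Q (x, t) (1, 0)) x := by
  have hg : HasDerivAt (fun y : ℝ => ((y, t) : ℝ × ℝ)) ((1 : ℝ), (0 : ℝ)) x :=
    (hasDerivAt_id x).prodMk (hasDerivAt_const x t)
  exact h.hasFDerivAt.comp_hasDerivAt x hg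

lemma hasDerivAt_unc_snd {Q : ℝ × ℝ → ℝ} {x t : ℝ} (h : DifferentiableAt ℝ Q (x, t)) :
    HasDerivAt (fun s => Q (x, s)) (fderiv ℝ Q (x, t) (0, 1)) t := by
  have hg : HasDerivAt (fun s : ℝ => ((x, s) : ℝ × ℝ)) ((0 : ℝ), (1 : ℝ)) t :=
    (hasDerivAt_const t x).prodMk (hasDerivAt_id t)
  exact h.hasFDerivAt.comp_hasDerivAt t hg

lemma wave_diff {a c d T₀ T₁ : ℝ} {p : ℝ → ℝ → ℝ} (hw : IsWaveSolution a c d T₀ T₁ p)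
    {x t : ℝ} (hx : x ∈ Set.Icc c d) (ht : t ∈ Set.Icc T₀ T₁) :
    DifferentiableAt ℝ (fun y => p y t) x ∧ DifferentiableAt ℝ (fun s => p x s) t := by
  obtain ⟨U, hUo, hUsub, hC2, -⟩ := hw
  have hq : ((x, t) : ℝ × ℝ) ∈ U := hUsub ⟨hx, ht⟩
  have hd : DifferentiableAt ℝ (fun q : ℝ × ℝ => p q.1 q.2) (x, t) :=
    (hC2.differentiableOn two_ne_zero).differentiableAt (hUo.mem_nhds hq)
  exact ⟨(hasDerivAt_unc_fst hd).differentiableAt, (hasDerivAt_unc_snd hd).differentiableAt⟩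

lemma wave_transport {a : ℝ} (ha : 0 < a) {e : ℝ} (he : e = 1 ∨ e = -1)
    {c d T₀ T₁ : ℝ} {p : ℝ → ℝ → ℝ} (hw : IsWaveSolution a c d T₀ T₁ p)
    (x1 t1 t2 : ℝ) (ht : t2 ≤ t1)
    (hseg : ∀ s ∈ Set.Icc t2 t1,
      (x1 + e * a * (t1 - s)) ∈ Set.Icc c d ∧ s ∈ Set.Icc T₀ T₁) :
    deriv (fun s => p x1 s) t1 + e * a * deriv (fun y => p y t1) x1 =
      deriv (fun s => p (x1 + e * a * (t1 - t2)) s) t2 +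
        e * a * deriv (fun y => p y t2) (x1 + e * a * (t1 - t2)) := by
  obtain ⟨U, hUo, hUsub, hC2, hwave⟩ := hw
  set P : ℝ × ℝ → ℝ := fun q => p q.1 q.2 with hPdef
  have hdiff : ∀ q ∈ U, DifferentiableAt ℝ P q := fun q hq =>
    (hC2.differentiableOn two_ne_zero).differentiableAt (hUo.mem_nhds hq)
  have hfd : ContDiffOn ℝ 1 (fderiv ℝ P) U := hC2.fderiv_of_isOpen hUo (by norm_num)
  have hfdiff : ∀ q ∈ U, DifferentiableAt ℝ (fderiv ℝ P) q := fun q hq =>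
    (hfd.differentiableOn one_ne_zero).differentiableAt (hUo.mem_nhds hq)
  set L01 : ((ℝ × ℝ) →L[ℝ] ℝ) →L[ℝ] ℝ :=
    ContinuousLinearMap.apply ℝ ℝ (((0 : ℝ), (1 : ℝ)) : ℝ × ℝ) with hL01
  set L10 : ((ℝ × ℝ) →L[ℝ] ℝ) →L[ℝ] ℝ :=
    ContinuousLinearMap.apply ℝ ℝ (((1 : ℝ), (0 : ℝ)) : ℝ × ℝ) with hL10
  set Pt : ℝ × ℝ → ℝ := fun q => fderiv ℝ P q (0, 1) with hPtdef
  set Px : ℝ × ℝ → ℝ := fun q => fderiv ℝ P q (1, 0) with hPxdef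
  set S : ℝ × ℝ → (ℝ × ℝ) →L[ℝ] ((ℝ × ℝ) →L[ℝ] ℝ) := fderiv ℝ (fderiv ℝ P) with hSdef
  have hPtfd : ∀ q ∈ U, HasFDerivAt Pt (L01.comp (S q)) q := fun q hq =>
    (L01.hasFDerivAt).comp q (hfdiff q hq).hasFDerivAt
  have hPxfd : ∀ q ∈ U, HasFDerivAt Px (L10.comp (S q)) q := fun q hq =>
    (L10.hasFDerivAt).comp q (hfdiff q hq).hasFDerivAt
  have dPt : ∀ x t, ((x, t) : ℝ × ℝ) ∈ U → deriv (fun s => p x s) t = Pt (x, t) := by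
    intro x t h
    exact (hasDerivAt_unc_snd (hdiff _ h)).deriv
  have dPx : ∀ x t, ((x, t) : ℝ × ℝ) ∈ U → deriv (fun y => p y t) x = Px (x, t) := by
    intro x t h
    exact (hasDerivAt_unc_fst (hdiff _ h)).deriv
  -- wave equation in terms of the second differential S
  have hwaveS : ∀ x t, x ∈ Set.Icc c d → t ∈ Set.Icc T₀ T₁ →
      S (x, t) (0, 1) (0, 1) = a ^ 2 * S (x, t) (1, 0) (1, 0) := by
    intro x t hx htt
    have hqU : ((x, t) : ℝ × ℝ) ∈ U := hUsub ⟨hx, htt⟩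
    have hmemt : ∀ᶠ s in nhds t, ((x, s) : ℝ × ℝ) ∈ U :=
      (continuous_const.prodMk continuous_id).continuousAt.preimage_mem_nhds
        (hUo.mem_nhds hqU)
    have hmemx : ∀ᶠ y in nhds x, ((y, t) : ℝ × ℝ) ∈ U :=
      (continuous_id.prodMk continuous_const).continuousAt.preimage_mem_nhds
        (hUo.mem_nhds hqU)
    have hev_t : deriv (fun s => p x s) =ᶠ[nhds t] fun s => Pt (x, s) := by
      filter_upwards [hmemt] with s hs using dPt x s hs
    have hev_x : deriv (fun y => p y t) =ᶠ[nhds x] fun y => Px (y, t) := by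
      filter_upwards [hmemx] with y hy using dPx y t hy
    have h1 : deriv (deriv (fun s => p x s)) t = S (x, t) (0, 1) (0, 1) := by
      rw [hev_t.deriv_eq, (hasDerivAt_unc_snd (hPtfd _ hqU).differentiableAt).deriv,
        (hPtfd _ hqU).fderiv]
      simp [hL01]
    have h2 : deriv (deriv (fun y => p y t)) x = S (x, t) (1, 0) (1, 0) := by
      rw [hev_x.deriv_eq, (hasDerivAt_unc_fst (hPxfd _ hqU).differentiableAt).deriv,
        (hPxfd _ hqU).fderiv]
      simp [hL10]
    rw [← h1, ← h2]
    exact hwave x hx t htt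
  -- symmetry of second derivatives
  have hsymS : ∀ q ∈ U, S q (1, 0) (0, 1) = S q (0, 1) (1, 0) := by
    intro q hq
    have hev : ∀ᶠ y in nhds q, HasFDerivAt P (fderiv ℝ P y) y := by
      filter_upwards [hUo.mem_nhds hq] with y hy using (hdiff y hy).hasFDerivAt
    exact second_derivative_symmetric_of_eventually hev (hfdiff q hq).hasFDerivAt _ _
  -- the function along the characteristic
  set g : ℝ → ℝ := fun s => Pt (x1 + e * a * (t1 - s), s) + e * a * Px (x1 + e * a * (t1 - s), s)
    with hgdef
  have key : ∀ s ∈ Set.Icc t2 t1, HasDerivAt g 0 s := by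
    intro s hs
    obtain ⟨hxmem, htmem⟩ := hseg s hs
    have hqU : ((x1 + e * a * (t1 - s), s) : ℝ × ℝ) ∈ U := hUsub ⟨hxmem, htmem⟩
    have hcurve : HasDerivAt (fun s' : ℝ => ((x1 + e * a * (t1 - s'), s') : ℝ × ℝ))
        ((-(e * a), 1)) s := by
      have h1 : HasDerivAt (fun s' : ℝ => x1 + e * a * (t1 - s')) (-(e * a)) s := by
        simpa using (((hasDerivAt_id s).const_sub t1).const_mul (e * a)).const_add x1
      exact h1.prodMk (hasDerivAt_id s)
    have hFt := HasFDerivAt.comp_hasDerivAt (f := fun s' : ℝ => ((x1 + e * a * (t1 - s'), s') : ℝ × ℝ))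
      s (hPtfd _ hqU) hcurve
    have hFx := (HasFDerivAt.comp_hasDerivAt (f := fun s' : ℝ => ((x1 + e * a * (t1 - s'), s') : ℝ × ℝ))
      s (hPxfd _ hqU) hcurve).const_mul (e * a)
    have hsum := hFt.add hFx
    have hval : (L01.comp (S (x1 + e * a * (t1 - s), s))) (-(e * a), 1) +
        e * a * (L10.comp (S (x1 + e * a * (t1 - s), s))) (-(e * a), 1) = 0 := by
      have hvec : ((-(e * a) : ℝ), (1 : ℝ)) = ((0 : ℝ), (1 : ℝ)) - (e * a) • ((1 : ℝ), (0 : ℝ)) := by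
        simp [Prod.ext_iff]
      have hw := hwaveS _ _ hxmem htmem
      have hsy := hsymS _ hqU
      simp only [ContinuousLinearMap.comp_apply, hvec, map_sub, map_smul]
      simp only [hL01, hL10, ContinuousLinearMap.apply_apply, ContinuousLinearMap.sub_apply,
        ContinuousLinearMap.smul_apply, smul_eq_mul]
      rcases he with rfl | rfl
      · linear_combination hw - a * hsy
      · linear_combination hw + a * hsy
    rw [hval] at hsum
    exact hsum
  have hcont : ContinuousOn g (Set.Icc t2 t1) := fun s hs =>
    ((key s hs).differentiableAt.continuousAt).continuousWithinAt
  have hconst := constant_of_has_deriv_right_zero hcont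
    (fun s hs => ((key s (Set.Ico_subset_Icc_self hs)).hasDerivWithinAt))
  have hg : g t1 = g t2 := hconst t1 (Set.right_mem_Icc.2 ht)
  have h1U : ((x1, t1) : ℝ × ℝ) ∈ U := by
    have := hseg t1 (Set.right_mem_Icc.2 ht)
    have h := hUsub (Set.mk_mem_prod this.1 this.2)
    simpa using h
  have h2U : ((x1 + e * a * (t1 - t2), t2) : ℝ × ℝ) ∈ U := by
    have := hseg t2 (Set.left_mem_Icc.2 ht)
    exact hUsub (Set.mk_mem_prod this.1 this.2)
  have hgt1 : g t1 = Pt (x1, t1) + e * a * Px (x1, t1) := by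
    simp only [hgdef, sub_self, mul_zero, add_zero]
  rw [dPt x1 t1 (by simpa using h1U), dPx x1 t1 (by simpa using h1U),
    dPt _ _ h2U, dPx _ _ h2U, ← hgt1, hg]
/-- Global Maximum Waveform Time Span Theorem (N ≥ 2 sub-domains): within the
global maximum waveform time span Δt = minᵢ (Bᵢ − A_{i+1})/(2a), the
predictive boundary output flux waveform of each sub-domain equals that of the
true solution. -/
theorem global_max_waveform_time_span
    (a T_s τ : ℝ) (N : ℕ) (A B : ℕ → ℝ)
    (ha : 0 < a) (hτ : 0 < τ) (hN : 2 ≤ N)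
    (hAmono : ∀ i, 1 ≤ i → i + 1 ≤ N → A i < A (i + 1))
    (hBmono : ∀ i, 1 ≤ i → i + 1 ≤ N → B i < B (i + 1))
    (hAB : ∀ i, 1 ≤ i → i ≤ N → A i < B i)
    (hoverlap : ∀ i, 1 ≤ i → i + 1 ≤ N → A (i + 1) < B i)
    (hdisjoint : ∀ i, 1 ≤ i → i + 2 ≤ N → B i ≤ A (i + 2))
    (u : ℝ → ℝ → ℝ) (phat : ℕ → ℝ → ℝ → ℝ)
    (hu : IsWaveSolution a (A 1) (B N) T_s (T_s + τ) u)
    (hp : ∀ i, 1 ≤ i → i ≤ N →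
      IsWaveSolution a (A i) (B i) T_s (T_s + τ) (phat i))
    (hinit : ∀ i, 1 ≤ i → i ≤ N → ∀ x ∈ Set.Icc (A i) (B i),
      phat i x T_s = u x T_s)
    (hinit' : ∀ i, 1 ≤ i → i ≤ N → ∀ x ∈ Set.Icc (A i) (B i),
      deriv (fun s => phat i x s) T_s = deriv (fun s => u x s) T_s)
    (hDirL : ∀ t ∈ Set.Icc T_s (T_s + τ), phat 1 (A 1) t = u (A 1) t)
    (hDirR : ∀ t ∈ Set.Icc T_s (T_s + τ), phat N (B N) t = u (B N) t)
    (hzeroR : ∀ i, 1 ≤ i → i + 1 ≤ N → ∀ t ∈ Set.Icc T_s (T_s + τ),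
      deriv (fun y => phat i y t) (B i) = 0)
    (hzeroL : ∀ i, 2 ≤ i → i ≤ N → ∀ t ∈ Set.Icc T_s (T_s + τ),
      deriv (fun y => phat i y t) (A i) = 0)
    (Δt : ℝ)
    (hΔt : IsGLB ((fun i => (B i - A (i + 1)) / (2 * a)) ''
      {i : ℕ | 1 ≤ i ∧ i + 1 ≤ N}) Δt) :
    (∀ i, 1 ≤ i → i + 1 ≤ N → ∀ t ∈ Set.Icc T_s (T_s + τ), t - T_s ≤ Δt →
      deriv (fun y => phat i y t) (A (i + 1)) = deriv (fun y => u y t) (A (i + 1))) ∧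
    (∀ i, 2 ≤ i → i ≤ N → ∀ t ∈ Set.Icc T_s (T_s + τ), t - T_s ≤ Δt →
      deriv (fun y => phat i y t) (B (i - 1)) = deriv (fun y => u y t) (B (i - 1))) := by
  have hTτ : T_s < T_s + τ := by linarith
  have h1N : (1 : ℕ) ≤ N := by omega
  -- monotonicity chains
  have hchainA : ∀ i j, 1 ≤ i → i ≤ j → j ≤ N → A i ≤ A j := by
    intro i j h1 hij hjN
    induction j, hij using Nat.le_induction with
    | base => exact le_refl _
    | succ j hj ih =>
      exact (ih (by omega)).trans (hAmono j (by omega) (by omega)).le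
  have hchainB : ∀ i j, 1 ≤ i → i ≤ j → j ≤ N → B i ≤ B j := by
    intro i j h1 hij hjN
    induction j, hij using Nat.le_induction with
    | base => exact le_refl _
    | succ j hj ih =>
      exact (ih (by omega)).trans (hBmono j (by omega) (by omega)).le
  have hsubx : ∀ i, 1 ≤ i → i ≤ N → ∀ x ∈ Set.Icc (A i) (B i),
      x ∈ Set.Icc (A 1) (B N) := fun i h1 h2 x hx =>
    ⟨le_trans (hchainA 1 i le_rfl h1 h2) hx.1, le_trans hx.2 (hchainB i N h1 h2 le_rfl)⟩
  -- initial flux match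
  have hinitE : ∀ i, 1 ≤ i → i ≤ N → ∀ e : ℝ, ∀ x ∈ Set.Icc (A i) (B i),
      deriv (fun s => phat i x s) T_s + e * a * deriv (fun y => phat i y T_s) x
        = deriv (fun s => u x s) T_s + e * a * deriv (fun y => u y T_s) x := by
    intro i h1 h2 e x hx
    have hx' := hsubx i h1 h2 x hx
    have hT : T_s ∈ Set.Icc T_s (T_s + τ) := ⟨le_rfl, hTτ.le⟩
    have hdx : deriv (fun y => phat i y T_s) x = deriv (fun y => u y T_s) x :=
      deriv_eq_of_eqOn_Icc (hAB i h1 h2) hx ((wave_diff (hp i h1 h2) hx hT).1)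
        ((wave_diff hu hx' hT).1) (hinit i h1 h2)
    rw [hinit' i h1 h2 x hx, hdx]
  -- Dirichlet time-derivative matches
  have hDirE1 : ∀ t ∈ Set.Icc T_s (T_s + τ),
      deriv (fun s => phat 1 (A 1) s) t = deriv (fun s => u (A 1) s) t := by
    intro t ht
    have hx1 : A 1 ∈ Set.Icc (A 1) (B 1) := ⟨le_rfl, (hAB 1 le_rfl h1N).le⟩
    exact deriv_eq_of_eqOn_Icc hTτ ht (wave_diff (hp 1 le_rfl h1N) hx1 ht).2
      (wave_diff hu (hsubx 1 le_rfl h1N _ hx1) ht).2 hDirL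
  have hDirEN : ∀ t ∈ Set.Icc T_s (T_s + τ),
      deriv (fun s => phat N (B N) s) t = deriv (fun s => u (B N) s) t := by
    intro t ht
    have hxN : B N ∈ Set.Icc (A N) (B N) := ⟨(hAB N h1N le_rfl).le, le_rfl⟩
    exact deriv_eq_of_eqOn_Icc hTτ ht (wave_diff (hp N h1N le_rfl) hxN ht).2
      (wave_diff hu (hsubx N h1N le_rfl _ hxN) ht).2 hDirR
  -- segment membership helper
  have hseg' : ∀ e : ℝ, e = 1 ∨ e = -1 → ∀ lo hi x0 t0 t2 : ℝ, lo ≤ x0 → x0 ≤ hi →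
      lo ≤ x0 + e * a * (t0 - t2) → x0 + e * a * (t0 - t2) ≤ hi →
      ∀ s ∈ Set.Icc t2 t0, x0 + e * a * (t0 - s) ∈ Set.Icc lo hi := by
    rintro e (rfl | rfl) lo hi x0 t0 t2 h1 h2 h3 h4 s hs
    · have k1 : 0 ≤ a * (t0 - s) := mul_nonneg ha.le (by linarith [hs.2])
      have k2 : 0 ≤ a * (s - t2) := mul_nonneg ha.le (by linarith [hs.1])
      constructor <;> [linarith; nlinarith]
    · have k1 : 0 ≤ a * (t0 - s) := mul_nonneg ha.le (by linarith [hs.2])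
      have k2 : 0 ≤ a * (s - t2) := mul_nonneg ha.le (by linarith [hs.1])
      constructor <;> [nlinarith; linarith]
  -- transported difference of flux combinations
  have key : ∀ i, 1 ≤ i → i ≤ N → ∀ e : ℝ, e = 1 ∨ e = -1 → ∀ x0 t0 t2 : ℝ,
      t0 ∈ Set.Icc T_s (T_s + τ) → T_s ≤ t2 → t2 ≤ t0 →
      x0 ∈ Set.Icc (A i) (B i) → (x0 + e * a * (t0 - t2)) ∈ Set.Icc (A i) (B i) →
      (deriv (fun s => phat i x0 s) t0 + e * a * deriv (fun y => phat i y t0) x0)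
        - (deriv (fun s => u x0 s) t0 + e * a * deriv (fun y => u y t0) x0)
      = (deriv (fun s => phat i (x0 + e * a * (t0 - t2)) s) t2
          + e * a * deriv (fun y => phat i y t2) (x0 + e * a * (t0 - t2)))
        - (deriv (fun s => u (x0 + e * a * (t0 - t2)) s) t2
          + e * a * deriv (fun y => u y t2) (x0 + e * a * (t0 - t2))) := by
    intro i h1 h2 e he x0 t0 t2 ht0 ht2a ht2b hx0 hfoot
    have hsegi : ∀ s ∈ Set.Icc t2 t0,
        (x0 + e * a * (t0 - s)) ∈ Set.Icc (A i) (B i) ∧ s ∈ Set.Icc T_s (T_s + τ) :=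
      fun s hs => ⟨hseg' e he _ _ _ _ _ hx0.1 hx0.2 hfoot.1 hfoot.2 s hs,
        ⟨le_trans ht2a hs.1, le_trans hs.2 ht0.2⟩⟩
    have tp := wave_transport ha he (hp i h1 h2) x0 t0 t2 ht2b hsegi
    have tu := wave_transport ha he hu x0 t0 t2 ht2b
      (fun s hs => ⟨hsubx i h1 h2 _ (hsegi s hs).1, (hsegi s hs).2⟩)
    rw [tp, tu]
  -- direct (characteristics reach the initial line inside the sub-domain)
  have direct : ∀ i, 1 ≤ i → i ≤ N → ∀ e : ℝ, e = 1 ∨ e = -1 → ∀ x0 t0 : ℝ,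
      t0 ∈ Set.Icc T_s (T_s + τ) → x0 ∈ Set.Icc (A i) (B i) →
      (x0 + e * a * (t0 - T_s)) ∈ Set.Icc (A i) (B i) →
      deriv (fun s => phat i x0 s) t0 + e * a * deriv (fun y => phat i y t0) x0
        = deriv (fun s => u x0 s) t0 + e * a * deriv (fun y => u y t0) x0 := by
    intro i h1 h2 e he x0 t0 ht0 hx0 hfoot
    have hk := key i h1 h2 e he x0 t0 T_s ht0 le_rfl ht0.1 hx0 hfoot
    rw [hinitE i h1 h2 e _ hfoot] at hk
    linarith [hk]
  -- left reflection at A 1 (sub-domain 1, left-going characteristic)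
  have reflL : ∀ x0 t0 : ℝ, t0 ∈ Set.Icc T_s (T_s + τ) → x0 ∈ Set.Icc (A 1) (B 1) →
      a * (t0 - T_s) ≤ B 1 - A 1 →
      deriv (fun s => phat 1 x0 s) t0 + (-1) * a * deriv (fun y => phat 1 y t0) x0
        = deriv (fun s => u x0 s) t0 + (-1) * a * deriv (fun y => u y t0) x0 := by
    intro x0 t0 ht0 hx0 hsmall
    have h0 : 0 ≤ a * (t0 - T_s) := mul_nonneg ha.le (by linarith [ht0.1])
    by_cases hc : A 1 ≤ x0 - a * (t0 - T_s)
    · exact direct 1 le_rfl h1N (-1) (Or.inr rfl) x0 t0 ht0 hx0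
        ⟨by linarith, by linarith [hx0.2]⟩
    · push_neg at hc
      set t1 : ℝ := t0 - (x0 - A 1) / a with ht1def
      have hx0A : A 1 ≤ x0 := hx0.1
      have ht1a : T_s < t1 := by
        have h' : (x0 - A 1) / a < t0 - T_s := by rw [div_lt_iff₀ ha]; nlinarith [hc]
        rw [ht1def]; linarith
      have ht1b : t1 ≤ t0 := by
        have h' : 0 ≤ (x0 - A 1) / a := div_nonneg (by linarith) ha.le
        rw [ht1def]; linarith
      have hfoot1 : x0 + (-1) * a * (t0 - t1) = A 1 := by
        rw [ht1def]; field_simp; ring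
      have hat1 : a * (t1 - T_s) = a * (t0 - T_s) - (x0 - A 1) := by
        rw [ht1def]; field_simp; ring
      have ht1m : t1 ∈ Set.Icc T_s (T_s + τ) := ⟨ht1a.le, le_trans ht1b ht0.2⟩
      have hk := key 1 le_rfl h1N (-1) (Or.inr rfl) x0 t0 t1 ht0 ht1a.le ht1b hx0
        (by rw [hfoot1]; exact ⟨le_rfl, (hAB 1 le_rfl h1N).le⟩)
      rw [hfoot1] at hk
      have hF := direct 1 le_rfl h1N 1 (Or.inl rfl) (A 1) t1 ht1m
        ⟨le_rfl, (hAB 1 le_rfl h1N).le⟩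
        ⟨by nlinarith [mul_nonneg ha.le (sub_nonneg.2 ht1a.le)],
         by linarith [hat1, hsmall, hx0A]⟩
      have hT := hDirE1 t1 ht1m
      have hX : a * deriv (fun y => phat 1 y t1) (A 1)
          = a * deriv (fun y => u y t1) (A 1) := by linarith [hF, hT]
      linarith [hk, hT, hX]
  -- right reflection at B N
  have reflR : ∀ x0 t0 : ℝ, t0 ∈ Set.Icc T_s (T_s + τ) → x0 ∈ Set.Icc (A N) (B N) →
      a * (t0 - T_s) ≤ B N - A N →
      deriv (fun s => phat N x0 s) t0 + 1 * a * deriv (fun y => phat N y t0) x0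
        = deriv (fun s => u x0 s) t0 + 1 * a * deriv (fun y => u y t0) x0 := by
    intro x0 t0 ht0 hx0 hsmall
    have h0 : 0 ≤ a * (t0 - T_s) := mul_nonneg ha.le (by linarith [ht0.1])
    by_cases hc : x0 + a * (t0 - T_s) ≤ B N
    · exact direct N h1N le_rfl 1 (Or.inl rfl) x0 t0 ht0 hx0
        ⟨by linarith [hx0.1], by linarith⟩
    · push_neg at hc
      set t1 : ℝ := t0 - (B N - x0) / a with ht1def
      have hx0B : x0 ≤ B N := hx0.2
      have ht1a : T_s < t1 := by
        have h' : (B N - x0) / a < t0 - T_s := by rw [div_lt_iff₀ ha]; nlinarith [hc]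
        rw [ht1def]; linarith
      have ht1b : t1 ≤ t0 := by
        have h' : 0 ≤ (B N - x0) / a := div_nonneg (by linarith) ha.le
        rw [ht1def]; linarith
      have hfoot1 : x0 + 1 * a * (t0 - t1) = B N := by
        rw [ht1def]; field_simp; ring
      have hat1 : a * (t1 - T_s) = a * (t0 - T_s) - (B N - x0) := by
        rw [ht1def]; field_simp; ring
      have ht1m : t1 ∈ Set.Icc T_s (T_s + τ) := ⟨ht1a.le, le_trans ht1b ht0.2⟩
      have hk := key N h1N le_rfl 1 (Or.inl rfl) x0 t0 t1 ht0 ht1a.le ht1b hx0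
        (by rw [hfoot1]; exact ⟨(hAB N h1N le_rfl).le, le_rfl⟩)
      rw [hfoot1] at hk
      have hG := direct N h1N le_rfl (-1) (Or.inr rfl) (B N) t1 ht1m
        ⟨(hAB N h1N le_rfl).le, le_rfl⟩
        ⟨by linarith [hat1, hsmall, hx0B],
         by nlinarith [mul_nonneg ha.le (sub_nonneg.2 ht1a.le)]⟩
      have hT := hDirEN t1 ht1m
      have hX : a * deriv (fun y => phat N y t1) (B N)
          = a * deriv (fun y => u y t1) (B N) := by linarith [hG, hT]
      linarith [hk, hT, hX]
  -- bound extraction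
  have hbnd : ∀ j t, 1 ≤ j → j + 1 ≤ N → t - T_s ≤ Δt →
      a * (t - T_s) ≤ (B j - A (j + 1)) / 2 := by
    intro j t hj1 hj2 hts
    have hΔj : Δt ≤ (B j - A (j + 1)) / (2 * a) := hΔt.1 ⟨j, ⟨hj1, hj2⟩, rfl⟩
    have h1 : t - T_s ≤ (B j - A (j + 1)) / (2 * a) := le_trans hts hΔj
    have h2 := mul_le_mul_of_nonneg_left h1 ha.le
    have heq : a * ((B j - A (j + 1)) / (2 * a)) = (B j - A (j + 1)) / 2 := by
      field_simp
    linarith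
  constructor
  · -- output flux toward the right neighbour
    intro i hi1 hi2 t ht hts
    have hiN : i ≤ N := by omega
    have hbound := hbnd i t hi1 hi2 hts
    have ht0 : 0 ≤ a * (t - T_s) := mul_nonneg ha.le (by linarith [ht.1])
    have hov := hoverlap i hi1 hi2
    have hAm := hAmono i hi1 hi2
    have hx0 : A (i + 1) ∈ Set.Icc (A i) (B i) := ⟨hAm.le, hov.le⟩
    have hF := direct i hi1 hiN 1 (Or.inl rfl) (A (i + 1)) t ht hx0
      ⟨by linarith, by linarith [hbound, hov]⟩
    have hG : deriv (fun s => phat i (A (i + 1)) s) t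
          + (-1) * a * deriv (fun y => phat i y t) (A (i + 1))
        = deriv (fun s => u (A (i + 1)) s) t
          + (-1) * a * deriv (fun y => u y t) (A (i + 1)) := by
      by_cases hi : i = 1
      · subst hi
        exact reflL (A 2) t ht hx0 (by linarith [hbound, hov, hAmono 1 le_rfl hi2])
      · obtain ⟨j, rfl⟩ : ∃ j, i = j + 1 := ⟨i - 1, by omega⟩
        have hj1 : 1 ≤ j := by omega
        have hdis : B j ≤ A (j + 1 + 1) := hdisjoint j hj1 (by omega)
        have hovj : A (j + 1) < B j := hoverlap j hj1 (by omega)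
        have hboundj := hbnd j t hj1 (by omega) hts
        exact direct (j + 1) (by omega) hiN (-1) (Or.inr rfl) (A (j + 1 + 1)) t ht hx0
          ⟨by linarith [hboundj, hdis, hovj], by linarith [hx0.2]⟩
    have hX : a * deriv (fun y => phat i y t) (A (i + 1))
        = a * deriv (fun y => u y t) (A (i + 1)) := by linarith [hF, hG]
    exact mul_left_cancel₀ (ne_of_gt ha) hX
  · -- output flux toward the left neighbour
    intro i hi2 hiN t ht hts
    obtain ⟨j, rfl⟩ : ∃ j, i = j + 1 := ⟨i - 1, by omega⟩
    have hj1 : 1 ≤ j := by omega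
    show deriv (fun y => phat (j + 1) y t) (B j) = deriv (fun y => u y t) (B j)
    have hbound := hbnd j t hj1 (by omega) hts
    have ht0 : 0 ≤ a * (t - T_s) := mul_nonneg ha.le (by linarith [ht.1])
    have hovj : A (j + 1) < B j := hoverlap j hj1 (by omega)
    have hBm : B j < B (j + 1) := hBmono j hj1 (by omega)
    have hx0 : B j ∈ Set.Icc (A (j + 1)) (B (j + 1)) := ⟨hovj.le, hBm.le⟩
    have hG := direct (j + 1) (by omega) hiN (-1) (Or.inr rfl) (B j) t ht hx0
      ⟨by linarith [hbound, hovj], by linarith [hx0.2]⟩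
    have hF : deriv (fun s => phat (j + 1) (B j) s) t
          + 1 * a * deriv (fun y => phat (j + 1) y t) (B j)
        = deriv (fun s => u (B j) s) t
          + 1 * a * deriv (fun y => u y t) (B j) := by
      by_cases hi : j + 1 = N
      · rw [hi] at hx0 hbound ⊢
        have hABN : A N < B N := hAB N h1N le_rfl
        have hBjN : B j ≤ B N := by rw [← hi]; exact hBm.le
        have hANj : A N < B j := by rw [← hi]; exact hovj
        exact reflR (B j) t ht hx0 (by linarith [hbound, hANj, hBjN])
      · have hj2N : j + 1 + 1 ≤ N := by omega
        have hdis : B j ≤ A (j + 1 + 1) := hdisjoint j hj1 (by omega)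
        have hovj1 : A (j + 1 + 1) < B (j + 1) := hoverlap (j + 1) (by omega) hj2N
        have hboundj1 := hbnd (j + 1) t (by omega) hj2N hts
        exact direct (j + 1) (by omega) hiN 1 (Or.inl rfl) (B j) t ht hx0
          ⟨by linarith [hx0.1], by linarith [hboundj1, hdis, hovj1]⟩
    have hX : a * deriv (fun y => phat (j + 1) y t) (B j)
        = a * deriv (fun y => u y t) (B j) := by linarith [hF, hG]
    exact mul_left_cancel₀ (ne_of_gt ha) hX
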